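/- For real numbers λ₁, λ₂, ..., λₙ with 0 ≤ λ₁ ≤ λ₂ ≤ ... ≤ λₙ: 1 + λₙe₁ + λₙλₙ₋₁e₂ + ... + λₙλₙ₋₁···λ₁eₙ ≥ ∏ᵢ₌₁ⁿ (1 + λᵢ²), where eₖ = eₖ(λ₁,...,λₙ) is the k-th elementary symmetric polynomial. -/

import Mathlib

open Finset

lemma strictMono_add_le {k n : ℕ} (f : Fin k → Fin n) (hf : StrictMono f)
    (j : Fin k) (m : ℕ) (h : j.val + m < k) :
    (f j).val + m ≤ (f ⟨j.val + m, h⟩).val := by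
  induction m with
  | zero => simp
  | succ m ih =>
    have h' : j.val + m < k := by omega
    have step : f ⟨j.val + m, h'⟩ < f ⟨j.val + m + 1, h⟩ := by
      apply hf
      simp [Fin.lt_def]
    have := ih h'
    have hfe : f ⟨j.val + (m + 1), h⟩ = f ⟨j.val + m + 1, h⟩ := rfl
    rw [hfe]
    omega

lemma fin_strictMono_bound {k n : ℕ} (f : Fin k → Fin n) (hf : StrictMono f)
    (j : Fin k) : (f j).val ≤ n - k + j.val := by
  have hk : 0 < k := j.pos
  have h : j.val + (k - 1 - j.val) < k := by omega
  have := strictMono_add_le f hf j (k - 1 - j.val) h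
  have hlt : (f ⟨j.val + (k - 1 - j.val), h⟩).val < n := (f _).isLt
  omega

lemma key_prod_le {n k : ℕ} (hk : k ≤ n) (lam : Fin n → ℝ)
    (hpos : ∀ i, 0 ≤ lam i) (hmono : Monotone lam)
    (S : Finset (Fin n)) (hS : S.card = k) :
    ∏ i ∈ S, lam i ≤
      ∏ i ∈ (Finset.univ.filter (fun i : Fin n => n - k ≤ (i : ℕ))), lam i := by
  have hemb : ∀ j : Fin k, n - k + (j : ℕ) < n := fun j => by omega
  set e : Fin k ↪ Fin n :=
    ⟨fun j => ⟨n - k + (j : ℕ), hemb j⟩, by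
      intro a b hab
      have : n - k + (a : ℕ) = n - k + (b : ℕ) := congrArg Fin.val hab
      exact Fin.ext (by omega)⟩ with he
  have hT : (Finset.univ.filter (fun i : Fin n => n - k ≤ (i : ℕ)))
      = Finset.map e Finset.univ := by
    ext x
    simp only [mem_filter, mem_univ, true_and, mem_map, he, Function.Embedding.coeFn_mk]
    constructor
    · intro hx
      refine ⟨⟨(x : ℕ) - (n - k), by omega⟩, Fin.ext ?_⟩
      show n - k + ((x : ℕ) - (n - k)) = x; omega
    · rintro ⟨j, rfl⟩; show n - k ≤ n - k + (j : ℕ); omega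
  have hSmap : S = Finset.map (S.orderEmbOfFin hS).toEmbedding Finset.univ := by
    ext x
    simp only [mem_map, mem_univ, true_and, RelEmbedding.coe_toEmbedding]
    constructor
    · intro hx
      have : x ∈ Set.range (S.orderEmbOfFin hS) := by
        rw [Finset.range_orderEmbOfFin]; exact hx
      obtain ⟨j, hj⟩ := this
      exact ⟨j, hj⟩
    · rintro ⟨j, rfl⟩; exact Finset.orderEmbOfFin_mem S hS j
  rw [hT, hSmap, Finset.prod_map, Finset.prod_map]
  apply Finset.prod_le_prod
  · intro j _; exact hpos _
  · intro j _
    apply hmono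
    have := fin_strictMono_bound (S.orderEmbOfFin hS) (S.orderEmbOfFin hS).strictMono j
    simp only [he, Function.Embedding.coeFn_mk, RelEmbedding.coe_toEmbedding]
    exact Fin.le_def.mpr this

theorem djokovic_type_A_AS1 (n : ℕ) (hn : 1 ≤ n) (lam : Fin n → ℝ)
    (hpos : ∀ i, 0 ≤ lam i)
    (hmono : Monotone lam) :
    (∏ i : Fin n, (1 + lam i ^ 2)) ≤
      ∑ k ∈ Finset.range (n+1),
        (∏ i ∈ (Finset.univ.filter (fun i : Fin n => n - k ≤ (i : ℕ))), lam i) *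
        (∑ s ∈ Finset.powersetCard k (Finset.univ : Finset (Fin n)), ∏ i ∈ s, lam i) := by
  have expand : (∏ i : Fin n, (1 + lam i ^ 2))
      = ∑ S ∈ (Finset.univ : Finset (Fin n)).powerset, ∏ i ∈ S, lam i ^ 2 := by
    have h := Finset.prod_add (fun i => lam i ^ 2) (fun _ : Fin n => (1 : ℝ)) Finset.univ
    simp only [Finset.prod_const_one, mul_one] at h
    calc ∏ i : Fin n, (1 + lam i ^ 2) = ∏ i : Fin n, (lam i ^ 2 + 1) := by
          simp [add_comm]
      _ = _ := h
  rw [expand, Finset.sum_powerset]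
  simp only [Finset.card_univ, Fintype.card_fin]
  apply Finset.sum_le_sum
  intro k hk
  rw [Finset.mul_sum]
  apply Finset.sum_le_sum
  intro S hS
  rw [Finset.mem_powersetCard] at hS
  have hkn : k ≤ n := by
    rw [← hS.2]; simpa using Finset.card_le_card hS.1
  have h1 : ∏ i ∈ S, lam i ^ 2 = (∏ i ∈ S, lam i) * (∏ i ∈ S, lam i) := by
    rw [← Finset.prod_mul_distrib]; congr 1; ext i; ring
  rw [h1]
  apply mul_le_mul_of_nonneg_right
  · exact key_prod_le hkn lam hpos hmono S hS.2
  · exact Finset.prod_nonneg fun i _ => hpos i
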